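/- Matrix Cramér–Rao lower bound: let (Ω, P) be a probability space and U, V : Ω → (Fin d → ℝ) random vectors all of whose components are square-integrable. Suppose the d×d matrix with entries ∫ U(ω) i · V(ω) j dP(ω) equals the identity matrix, and that the matrix F with entries F i j = ∫ V(ω) i · V(ω) j dP(ω) is positive definite. Then the matrix with entries ∫ U(ω) i · U(ω) j dP(ω) minus F⁻¹ is positive semidefinite. -/

import Mathlib

open MeasureTheory
open scoped Matrix

private lemma integrable_mul_of_memL2 {Ω : Type*} [MeasurableSpace Ω] {P : Measure Ω}
    {f g : Ω → ℝ} (hf : MemLp f 2 P) (hg : MemLp g 2 P) :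
    Integrable (fun ω => f ω * g ω) P := by
  have h := (((hf.add hg).integrable_sq.sub hf.integrable_sq).sub hg.integrable_sq).div_const 2
  have heq : (fun ω => f ω * g ω)
      = fun ω => (((f ω + g ω) ^ 2 - f ω ^ 2) - g ω ^ 2) / 2 := by
    ext ω; ring
  rw [heq]; exact h

private lemma integral_dot_mul_dot {Ω : Type*} [MeasurableSpace Ω] (P : Measure Ω)
    [IsProbabilityMeasure P] {d : ℕ} (f g : Ω → (Fin d → ℝ))
    (hf : ∀ i, MemLp (fun ω => f ω i) 2 P) (hg : ∀ i, MemLp (fun ω => g ω i) 2 P)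
    (x y : Fin d → ℝ) :
    ∫ ω, (∑ i, x i * f ω i) * (∑ j, y j * g ω j) ∂P
      = ∑ i, ∑ j, x i * y j * ∫ ω, f ω i * g ω j ∂P := by
  have key : (fun ω => (∑ i, x i * f ω i) * (∑ j, y j * g ω j))
      = fun ω => ∑ i, ∑ j, x i * y j * (f ω i * g ω j) := by
    ext ω
    rw [Finset.sum_mul_sum]
    refine Finset.sum_congr rfl fun i _ => Finset.sum_congr rfl fun j _ => by ring
  rw [key]
  rw [integral_finset_sum _ fun i _ => integrable_finset_sum _ fun j _ =>
    ((integrable_mul_of_memL2 (hf i) (hg j)).const_mul _)]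
  refine Finset.sum_congr rfl fun i _ => ?_
  rw [integral_finset_sum _ fun j _ => ((integrable_mul_of_memL2 (hf i) (hg j)).const_mul _)]
  exact Finset.sum_congr rfl fun j _ => integral_const_mul _ _

/-- Matrix Cramér–Rao lower bound: if `E[U Vᵀ] = 1` and the second-moment matrix `F` of `V` is
positive definite, then `E[U Uᵀ] - F⁻¹` is positive semidefinite. -/
theorem cramer_rao_matrix {Ω : Type*} [MeasurableSpace Ω]
    (P : Measure Ω) [IsProbabilityMeasure P] {d : ℕ}
    (U V : Ω → (Fin d → ℝ))
    (hU : ∀ i, MemLp (fun ω => U ω i) 2 P) (hV : ∀ i, MemLp (fun ω => V ω i) 2 P)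
    (hreg : (Matrix.of fun i j : Fin d => ∫ ω, U ω i * V ω j ∂P) = 1)
    (F : Matrix (Fin d) (Fin d) ℝ)
    (hF : F = Matrix.of fun i j : Fin d => ∫ ω, V ω i * V ω j ∂P)
    (hFpd : F.PosDef) :
    ((Matrix.of fun i j : Fin d => ∫ ω, U ω i * U ω j ∂P) - F⁻¹).PosSemidef := by
  set M : Matrix (Fin d) (Fin d) ℝ := Matrix.of fun i j : Fin d => ∫ ω, U ω i * U ω j ∂P with hM
  have hdet : IsUnit F.det := isUnit_iff_ne_zero.2 (ne_of_gt hFpd.det_pos)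
  have hFherm : F.IsHermitian := hFpd.1
  have hFinvherm : F⁻¹.IsHermitian := hFherm.inv
  have hMherm : M.IsHermitian := by
    ext i j
    simp only [hM, Matrix.conjTranspose_apply, Matrix.of_apply, star_trivial]
    exact integral_congr_ae (Filter.Eventually.of_forall fun ω => mul_comm _ _)
  rw [Matrix.posSemidef_iff_dotProduct_mulVec]
  constructor
  · exact hMherm.sub hFinvherm
  intro x
  simp only [star_trivial, Matrix.sub_mulVec, dotProduct_sub, sub_nonneg]
  -- set up the vectors
  set y : Fin d → ℝ := F⁻¹ *ᵥ x with hy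
  set a : Ω → ℝ := fun ω => ∑ i, x i * U ω i with ha
  set b : Ω → ℝ := fun ω => ∑ i, y i * V ω i with hb
  -- c = x ⬝ᵥ F⁻¹x
  have hFy : F *ᵥ y = x := by
    rw [hy, Matrix.mulVec_mulVec, Matrix.mul_nonsing_inv _ hdet, Matrix.one_mulVec]
  -- ∫ a² = x ⬝ᵥ M x
  have hEaa : ∫ ω, a ω * a ω ∂P = x ⬝ᵥ (M *ᵥ x) := by
    rw [integral_dot_mul_dot P U U hU hU x x]
    simp only [dotProduct, Matrix.mulVec, dotProduct, hM, Matrix.of_apply]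
    rw [Finset.sum_congr rfl fun i _ => Finset.mul_sum _ _ _]
    exact Finset.sum_congr rfl fun i _ => Finset.sum_congr rfl fun j _ => by ring
  -- ∫ a b = x ⬝ᵥ y
  have hEab : ∫ ω, a ω * b ω ∂P = x ⬝ᵥ y := by
    rw [integral_dot_mul_dot P U V hU hV x y]
    have : ∀ i j, (∫ ω, U ω i * V ω j ∂P) = (1 : Matrix (Fin d) (Fin d) ℝ) i j := by
      intro i j; rw [← hreg]; rfl
    simp only [this]
    rw [dotProduct]
    refine Finset.sum_congr rfl fun i _ => ?_
    rw [Finset.sum_eq_single i]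
    · simp [Matrix.one_apply]
    · intro j _ hj; simp [Matrix.one_apply, Ne.symm hj]
    · intro h; exact absurd (Finset.mem_univ i) h
  -- ∫ b² = y ⬝ᵥ F y = y ⬝ᵥ x
  have hEbb : ∫ ω, b ω * b ω ∂P = y ⬝ᵥ x := by
    rw [integral_dot_mul_dot P V V hV hV y y]
    have : ∀ i j, (∫ ω, V ω i * V ω j ∂P) = F i j := by intro i j; rw [hF]; rfl
    simp only [this]
    calc (∑ i, ∑ j, y i * y j * F i j) = y ⬝ᵥ (F *ᵥ y) := by
          simp only [dotProduct, Matrix.mulVec, dotProduct]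
          rw [Finset.sum_congr rfl fun i _ => Finset.mul_sum _ _ _]
          exact Finset.sum_congr rfl fun i _ => Finset.sum_congr rfl fun j _ => by ring
      _ = y ⬝ᵥ x := by rw [hFy]
  have hxy : x ⬝ᵥ y = y ⬝ᵥ x := dotProduct_comm x y
  -- integrability of a, b as MemLp 2
  have hma : MemLp a 2 P := by
    have h := memLp_finset_sum' (μ := P) Finset.univ
      (fun i (_ : i ∈ Finset.univ) => (hU i).const_mul (x i))
    convert h using 1
    ext ω; simp [ha]
  have hmb : MemLp b 2 P := by
    have h := memLp_finset_sum' (μ := P) Finset.univ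
      (fun i (_ : i ∈ Finset.univ) => (hV i).const_mul (y i))
    convert h using 1
    ext ω; simp [hb]
  -- the positivity trick: 0 ≤ ∫ (a - b)²
  have hnn : 0 ≤ ∫ ω, (a ω - b ω) * (a ω - b ω) ∂P :=
    integral_nonneg fun ω => mul_self_nonneg _
  have hint : ∫ ω, (a ω - b ω) * (a ω - b ω) ∂P
      = (∫ ω, a ω * a ω ∂P) - 2 * (∫ ω, a ω * b ω ∂P) + ∫ ω, b ω * b ω ∂P := by
    have hIaa := integrable_mul_of_memL2 hma hma
    have hIab := integrable_mul_of_memL2 hma hmb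
    have hIbb := integrable_mul_of_memL2 hmb hmb
    have heq : (fun ω => (a ω - b ω) * (a ω - b ω))
        = fun ω => (a ω * a ω - 2 * (a ω * b ω)) + b ω * b ω := by
      ext ω; ring
    have hIsub : Integrable (fun ω => a ω * a ω - 2 * (a ω * b ω)) P :=
      hIaa.sub (hIab.const_mul 2)
    rw [heq, integral_add hIsub hIbb,
      integral_sub hIaa (hIab.const_mul 2), integral_const_mul]
  rw [hint, hEaa, hEab, hEbb, hxy] at hnn
  -- conclude: x⬝ᵥF⁻¹x = x⬝ᵥy ≤ x⬝ᵥMx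
  have : x ⬝ᵥ (F⁻¹ *ᵥ x) = y ⬝ᵥ x := by rw [← hy, hxy]
  rw [this]
  linarith
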